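/- For k ≥ 1 and 1 ≤ s ≤ k, the number of binary words x of length 2k+1 with Z(x) = s equals C(2k+1, k-s+1), and the number with Z(x) = -s equals C(2k+1, k-s). -/

import Mathlib

/-- Number of 0's (`false`) at odd positions (1-based) of a binary word. -/
def oddZeros (x : List Bool) : ℕ :=
  ((x.zipIdx.map Prod.swap).filter (fun p => p.1 % 2 = 0 && p.2 == false)).length

/-- Number of 0's (`false`) at even positions (1-based) of a binary word. -/
def evenZeros (x : List Bool) : ℕ :=
  ((x.zipIdx.map Prod.swap).filter (fun p => p.1 % 2 = 1 && p.2 == false)).length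

/-- Z(x) = odd(x) - even(x). -/
def Zw (x : List Bool) : ℤ := (oddZeros x : ℤ) - (evenZeros x : ℤ)

open Finset

lemma len_filter_ofFn {α : Type*} (n : ℕ) (p : α → Bool) (g : Fin n → α) :
    ((List.ofFn g).filter p).length = (univ.filter (fun i => p (g i) = true)).card := by
  rw [List.ofFn_eq_map, List.filter_map, List.length_map]
  have h : (univ : Finset (Fin n)) = (List.finRange n).toFinset := by
    simp [List.toFinset_finRange]
  rw [h, ← List.toFinset_filter,
    List.toFinset_card_of_nodup (List.Nodup.filter _ (List.nodup_finRange n))]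
  congr 1

lemma enum_ofFn' (n : ℕ) (x : Fin n → Bool) :
    ((List.ofFn x).zipIdx.map Prod.swap) = List.ofFn (fun i : Fin n => ((i : ℕ), x i)) := by
  apply List.ext_getElem
  · simp
  · intro i h1 h2
    simp [List.getElem_zipIdx]

lemma oddZeros_ofFn (n : ℕ) (x : Fin n → Bool) :
    oddZeros (List.ofFn x) = (univ.filter (fun i : Fin n => i.val % 2 = 0 ∧ x i = false)).card := by
  rw [oddZeros, enum_ofFn', len_filter_ofFn]
  congr 1; ext i; simp

lemma evenZeros_ofFn (n : ℕ) (x : Fin n → Bool) :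
    evenZeros (List.ofFn x) = (univ.filter (fun i : Fin n => i.val % 2 = 1 ∧ x i = false)).card := by
  rw [evenZeros, enum_ofFn', len_filter_ofFn]
  congr 1; ext i; simp

lemma card_falseCount (n m : ℕ) :
    (univ.filter fun x : Fin n → Bool => (univ.filter fun i => x i = false).card = m).card
      = Nat.choose n m := by
  have h := Finset.card_powersetCard m (univ : Finset (Fin n))
  rw [Finset.card_univ, Fintype.card_fin] at h
  rw [← h]
  apply Finset.card_bij' (i := fun x _ => univ.filter fun i => x i = false)
    (j := fun s _ => fun i => decide (i ∉ s))
  case hi =>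
    intro x hx
    rw [Finset.mem_powersetCard_univ]
    exact (Finset.mem_filter.mp hx).2
  case hj =>
    intro s hs
    rw [Finset.mem_powersetCard_univ] at hs
    rw [Finset.mem_filter]
    refine ⟨Finset.mem_univ _, ?_⟩
    rw [← hs]
    congr 1
    ext i
    simp
  case left_inv =>
    intro x hx
    funext i
    by_cases h : x i = false <;> simp [h]
  case right_inv =>
    intro s hs
    ext i
    simp

/-- Flip the bits at odd (0-based) indices. -/
def flipOdd (n : ℕ) (x : Fin n → Bool) : Fin n → Bool :=
  fun i => if i.val % 2 = 1 then !(x i) else x i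

lemma flipOdd_invol (n : ℕ) (x : Fin n → Bool) : flipOdd n (flipOdd n x) = x := by
  funext i
  by_cases h : i.val % 2 = 1 <;> simp [flipOdd, h]

lemma card_filter_flip (n : ℕ) (P : (Fin n → Bool) → Prop) [DecidablePred P] :
    (univ.filter fun x => P (flipOdd n x)).card = (univ.filter P).card := by
  apply Finset.card_bij' (i := fun x _ => flipOdd n x) (j := fun x _ => flipOdd n x)
  case hi =>
    intro x hx
    rw [Finset.mem_filter] at *
    exact ⟨Finset.mem_univ _, hx.2⟩
  case hj =>
    intro x hx
    rw [Finset.mem_filter] at *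
    rw [flipOdd_invol]
    exact ⟨Finset.mem_univ _, hx.2⟩
  case left_inv => intro x _; exact flipOdd_invol n x
  case right_inv => intro x _; exact flipOdd_invol n x

lemma card_range_odd (n : ℕ) :
    ((Finset.range n).filter fun m => m % 2 = 1).card = n / 2 := by
  induction n with
  | zero => simp
  | succ n ih =>
    rw [Finset.range_add_one, Finset.filter_insert]
    by_cases h2 : n % 2 = 1
    · rw [if_pos h2, Finset.card_insert_of_notMem (by simp), ih]
      omega
    · rw [if_neg h2, ih]
      omega

lemma card_val_odd (n : ℕ) : (univ.filter fun i : Fin n => i.val % 2 = 1).card = n / 2 := by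
  rw [← card_range_odd n]
  apply Finset.card_bij (i := fun a _ => a.val)
  · intro a ha
    rw [Finset.mem_filter] at *
    exact ⟨Finset.mem_range.mpr a.isLt, ha.2⟩
  · intro a _ b _ hab
    exact Fin.val_injective hab
  · intro b hb
    rw [Finset.mem_filter, Finset.mem_range] at hb
    exact ⟨⟨b, hb.1⟩, Finset.mem_filter.mpr ⟨Finset.mem_univ _, hb.2⟩, rfl⟩

lemma key_eq (k : ℕ) (x : Fin (2 * k + 1) → Bool) :
    (((univ.filter fun i => flipOdd (2 * k + 1) x i = false).card : ℤ))
      = Zw (List.ofFn x) + k := by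
  have hsplit : (univ.filter fun i : Fin (2 * k + 1) => flipOdd (2 * k + 1) x i = false)
      = (univ.filter fun i : Fin (2 * k + 1) => i.val % 2 = 0 ∧ x i = false)
        ∪ (univ.filter fun i : Fin (2 * k + 1) => i.val % 2 = 1 ∧ x i = true) := by
    ext i
    rcases Nat.mod_two_eq_zero_or_one i.val with h | h <;>
      cases hx : x i <;> simp [flipOdd, h, hx]
  have hdisj : Disjoint (univ.filter fun i : Fin (2 * k + 1) => i.val % 2 = 0 ∧ x i = false)
      (univ.filter fun i : Fin (2 * k + 1) => i.val % 2 = 1 ∧ x i = true) := by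
    rw [Finset.disjoint_left]
    intro a ha hb
    rw [Finset.mem_filter] at *
    omega
  have hO : (univ.filter fun i : Fin (2 * k + 1) => i.val % 2 = 1)
      = (univ.filter fun i : Fin (2 * k + 1) => i.val % 2 = 1 ∧ x i = false)
        ∪ (univ.filter fun i : Fin (2 * k + 1) => i.val % 2 = 1 ∧ x i = true) := by
    ext i
    cases hx : x i <;> simp [hx]
  have hOdisj : Disjoint (univ.filter fun i : Fin (2 * k + 1) => i.val % 2 = 1 ∧ x i = false)
      (univ.filter fun i : Fin (2 * k + 1) => i.val % 2 = 1 ∧ x i = true) := by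
    rw [Finset.disjoint_left]
    intro a ha hb
    rw [Finset.mem_filter] at *
    simp_all
  have h1 : (univ.filter fun i : Fin (2 * k + 1) => flipOdd (2 * k + 1) x i = false).card
      = (univ.filter fun i : Fin (2 * k + 1) => i.val % 2 = 0 ∧ x i = false).card
        + (univ.filter fun i : Fin (2 * k + 1) => i.val % 2 = 1 ∧ x i = true).card := by
    rw [hsplit, Finset.card_union_of_disjoint hdisj]
  have h2 : (univ.filter fun i : Fin (2 * k + 1) => i.val % 2 = 1).card
      = (univ.filter fun i : Fin (2 * k + 1) => i.val % 2 = 1 ∧ x i = false).card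
        + (univ.filter fun i : Fin (2 * k + 1) => i.val % 2 = 1 ∧ x i = true).card := by
    rw [hO, Finset.card_union_of_disjoint hOdisj]
  have h3 : (univ.filter fun i : Fin (2 * k + 1) => i.val % 2 = 1).card = k := by
    rw [card_val_odd]; omega
  rw [Zw, oddZeros_ofFn, evenZeros_ofFn]
  omega

theorem card_Z_eq_s_odd_length (k s : ℕ) (hk : 1 ≤ k) (hs1 : 1 ≤ s) (hsk : s ≤ k) :
    (Finset.univ.filter (fun x : Fin (2 * k + 1) → Bool => Zw (List.ofFn x) = (s : ℤ))).card =
      Nat.choose (2 * k + 1) (k - s + 1) ∧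
    (Finset.univ.filter (fun x : Fin (2 * k + 1) → Bool => Zw (List.ofFn x) = -(s : ℤ))).card =
      Nat.choose (2 * k + 1) (k - s) := by
  constructor
  · have hcongr : (Finset.univ.filter
        (fun x : Fin (2 * k + 1) → Bool => Zw (List.ofFn x) = (s : ℤ)))
      = (Finset.univ.filter (fun x : Fin (2 * k + 1) → Bool =>
          (univ.filter fun i => flipOdd (2 * k + 1) x i = false).card = k + s)) := by
      apply Finset.filter_congr
      intro x _
      have h := key_eq k x
      constructor <;> intro hh <;> omega
    rw [hcongr]
    have hb := card_filter_flip (2 * k + 1)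
      (fun y : Fin (2 * k + 1) → Bool => (univ.filter fun i => y i = false).card = k + s)
    simp only [flipOdd] at hb ⊢
    rw [hb, card_falseCount]
    clear hb hcongr
    have h4 : k - s + 1 = 2 * k + 1 - (k + s) := by omega
    have h5 : Nat.choose (2 * k + 1) (k - s + 1) = Nat.choose (2 * k + 1) (k + s) := by
      rw [h4]
      exact Nat.choose_symm (by omega)
    exact h5.symm
  · have hcongr : (Finset.univ.filter
        (fun x : Fin (2 * k + 1) → Bool => Zw (List.ofFn x) = -(s : ℤ)))
      = (Finset.univ.filter (fun x : Fin (2 * k + 1) → Bool =>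
          (univ.filter fun i => flipOdd (2 * k + 1) x i = false).card = k - s)) := by
      apply Finset.filter_congr
      intro x _
      have h := key_eq k x
      constructor <;> intro hh <;> omega
    rw [hcongr]
    have hb := card_filter_flip (2 * k + 1)
      (fun y : Fin (2 * k + 1) → Bool => (univ.filter fun i => y i = false).card = k - s)
    simp only [flipOdd] at hb ⊢
    rw [hb, card_falseCount]
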